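/- Let φ(x,μ) solve -y'' + qy = μy with φ(0,μ) = sin α, φ'(0,μ) = -cos α, α ∈ (0,π]. For a zero x(μ) ∈ (0,π] of φ(·,μ) the derivative dx/dμ satisfies dx/dμ ≤ 0, with equality possible only if x(μ) = 0; since x(μ) > 0, the inequality is strict: dx/dμ < 0. -/

import Mathlib

open Real MeasureTheory Set

noncomputable section

open Topology Filter Asymptotics

lemma fubini_triangle {A B : ℝ → ℝ} {x : ℝ} (hx : 0 ≤ x)
    (hA : IntegrableOn A (Ioc 0 x) volume) (hB : IntegrableOn B (Ioc 0 x) volume) :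
    (∫ t in Ioc (0:ℝ) x, A t * ∫ s in Ioc (0:ℝ) t, B s)
      + (∫ t in Ioc (0:ℝ) x, (∫ s in Ioc (0:ℝ) t, A s) * B t)
    = (∫ t in Ioc (0:ℝ) x, A t) * (∫ t in Ioc (0:ℝ) x, B t) := by
  set μ0 : Measure ℝ := volume.restrict (Ioc 0 x) with hμ0
  -- integrability of the two triangle kernels
  have hAB : Integrable (fun p : ℝ × ℝ => A p.1 * B p.2) (μ0.prod μ0) := hA.mul_prod hB
  have hBA : Integrable (fun p : ℝ × ℝ => A p.2 * B p.1) (μ0.prod μ0) := by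
    have := hB.mul_prod hA
    simpa [mul_comm] using this
  have hmeas1 : MeasurableSet {p : ℝ × ℝ | p.2 ≤ p.1} :=
    measurableSet_le measurable_snd measurable_fst
  have hmeas2 : MeasurableSet {p : ℝ × ℝ | p.1 ≤ p.2} :=
    measurableSet_le measurable_fst measurable_snd
  have hG : Integrable (fun p : ℝ × ℝ => if p.2 ≤ p.1 then A p.1 * B p.2 else 0) (μ0.prod μ0) := by
    have := hAB.indicator hmeas1
    refine this.congr (Filter.Eventually.of_forall fun p => ?_); simp [Set.indicator_apply]
  have hG2 : Integrable (fun p : ℝ × ℝ => if p.1 ≤ p.2 then A p.1 * B p.2 else 0) (μ0.prod μ0) := by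
    have := hAB.indicator hmeas2
    refine this.congr (Filter.Eventually.of_forall fun p => ?_); simp [Set.indicator_apply]
  have hH : Integrable (fun p : ℝ × ℝ => if p.2 ≤ p.1 then A p.2 * B p.1 else 0) (μ0.prod μ0) := by
    have := hBA.indicator hmeas1
    refine this.congr (Filter.Eventually.of_forall fun p => ?_); simp [Set.indicator_apply]

  -- inner-integral computations
  have inner1 : ∀ t ∈ Ioc (0:ℝ) x,
      (∫ s, (if s ≤ t then A t * B s else 0) ∂μ0) = A t * ∫ s in Ioc (0:ℝ) t, B s := by
    intro t ht
    have : (fun s => if s ≤ t then A t * B s else 0)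
        = (Iic t).indicator (fun s => A t * B s) := by
      funext s; simp [Set.indicator_apply, Set.mem_Iic]
    rw [this, integral_indicator measurableSet_Iic, hμ0,
      Measure.restrict_restrict measurableSet_Iic]
    have hset : Iic t ∩ Ioc 0 x = Ioc 0 t := by
      ext s
      simp only [mem_inter_iff, mem_Iic, mem_Ioc]
      exact ⟨fun h => ⟨h.2.1, h.1⟩, fun h => ⟨h.2, h.1, h.2.trans ht.2⟩⟩
    rw [hset, integral_const_mul]
  have inner2 : ∀ t ∈ Ioc (0:ℝ) x,
      (∫ s, (if t ≤ s then A t * B s else 0) ∂μ0) = A t * ∫ s in Ioc t x, B s := by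
    intro t ht
    have : (fun s => if t ≤ s then A t * B s else 0)
        = (Ici t).indicator (fun s => A t * B s) := by
      funext s; simp [Set.indicator_apply, Set.mem_Ici]
    rw [this, integral_indicator measurableSet_Ici, hμ0,
      Measure.restrict_restrict measurableSet_Ici]
    have hset : Ici t ∩ Ioc 0 x = Icc t x := by
      ext s
      simp only [mem_inter_iff, mem_Ici, mem_Ioc, mem_Icc]
      exact ⟨fun h => ⟨h.1, h.2.2⟩, fun h => ⟨h.1, ht.1.trans_le h.1, h.2⟩⟩
    rw [hset, integral_Icc_eq_integral_Ioc, integral_const_mul]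
  have inner3 : ∀ t ∈ Ioc (0:ℝ) x,
      (∫ s, (if s ≤ t then A s * B t else 0) ∂μ0) = (∫ s in Ioc (0:ℝ) t, A s) * B t := by
    intro t ht
    have : (fun s => if s ≤ t then A s * B t else 0)
        = (Iic t).indicator (fun s => A s * B t) := by
      funext s; simp [Set.indicator_apply, Set.mem_Iic]
    rw [this, integral_indicator measurableSet_Iic, hμ0,
      Measure.restrict_restrict measurableSet_Iic]
    have hset : Iic t ∩ Ioc 0 x = Ioc 0 t := by
      ext s
      simp only [mem_inter_iff, mem_Iic, mem_Ioc]
      exact ⟨fun h => ⟨h.2.1, h.1⟩, fun h => ⟨h.2, h.1, h.2.trans ht.2⟩⟩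
    rw [hset, integral_mul_const]
  -- rewrite term1
  have hterm1 : (∫ t in Ioc (0:ℝ) x, A t * ∫ s in Ioc (0:ℝ) t, B s)
      = ∫ t, (∫ s, (if s ≤ t then A t * B s else 0) ∂μ0) ∂μ0 := by
    rw [hμ0]
    refine setIntegral_congr_fun measurableSet_Ioc (fun t ht => ?_)
    rw [inner1 t ht]
  -- rewrite term2 and swap
  have hterm2 : (∫ t in Ioc (0:ℝ) x, (∫ s in Ioc (0:ℝ) t, A s) * B t)
      = ∫ t, (∫ s, (if t ≤ s then A t * B s else 0) ∂μ0) ∂μ0 := by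
    have e1 : (∫ t in Ioc (0:ℝ) x, (∫ s in Ioc (0:ℝ) t, A s) * B t)
        = ∫ t, (∫ s, (if s ≤ t then A s * B t else 0) ∂μ0) ∂μ0 := by
      rw [hμ0]
      refine setIntegral_congr_fun measurableSet_Ioc (fun t ht => ?_)
      rw [inner3 t ht]
    rw [e1]
    exact (integral_integral_swap hG2).symm
  -- combine
  rw [hterm1, hterm2, ← integral_add hG.integral_prod_left hG2.integral_prod_left]
  have hae : ∀ᵐ t ∂μ0,
      ((∫ s, (if s ≤ t then A t * B s else 0) ∂μ0)
        + (∫ s, (if t ≤ s then A t * B s else 0) ∂μ0))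
      = A t * ∫ s in Ioc (0:ℝ) x, B s := by
    have hmem : ∀ᵐ t ∂μ0, t ∈ Ioc (0:ℝ) x :=
      (ae_restrict_iff' measurableSet_Ioc).2 (ae_of_all _ fun t ht => ht)
    filter_upwards [hmem] with t ht
    rw [inner1 t ht, inner2 t ht, ← mul_add]
    congr 1
    rw [← setIntegral_union (Set.Ioc_disjoint_Ioc_of_le le_rfl) measurableSet_Ioc
      (hB.mono_set (Set.Ioc_subset_Ioc_right ht.2)) (hB.mono_set (Set.Ioc_subset_Ioc_left ht.1.le)),
      Set.Ioc_union_Ioc_eq_Ioc ht.1.le ht.2]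
  rw [integral_congr_ae hae, integral_mul_const]

lemma prodRule {A B u v : ℝ → ℝ}
    (hA : IntervalIntegrable A volume 0 π) (hB : IntervalIntegrable B volume 0 π)
    (huc : ContinuousOn u (Icc 0 π)) (hvc : ContinuousOn v (Icc 0 π))
    (hu : ∀ y ∈ Icc (0:ℝ) π, u y = u 0 + ∫ t in (0:ℝ)..y, A t)
    (hv : ∀ y ∈ Icc (0:ℝ) π, v y = v 0 + ∫ t in (0:ℝ)..y, B t) :
    ∀ x ∈ Icc (0:ℝ) π, u x * v x = u 0 * v 0 + ∫ t in (0:ℝ)..x, (A t * v t + u t * B t) := by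
  intro x hx
  have hx0 : (0:ℝ) ≤ x := hx.1
  have hsub : uIcc (0:ℝ) x ⊆ uIcc (0:ℝ) π :=
    uIcc_subset_uIcc left_mem_uIcc (by rw [uIcc_of_le pi_pos.le]; exact hx)
  have hAx : IntervalIntegrable A volume 0 x := hA.mono_set hsub
  have hBx : IntervalIntegrable B volume 0 x := hB.mono_set hsub
  have iA : IntegrableOn A (Ioc 0 x) volume := (intervalIntegrable_iff_integrableOn_Ioc_of_le hx0).1 hAx
  have iB : IntegrableOn B (Ioc 0 x) volume := (intervalIntegrable_iff_integrableOn_Ioc_of_le hx0).1 hBx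
  have hIccx : Icc (0:ℝ) x ⊆ Icc 0 π := Icc_subset_Icc le_rfl hx.2
  -- primitives agree with u, v
  have hP : ∀ t ∈ Icc (0:ℝ) x, (∫ s in Ioc (0:ℝ) t, B s) = v t - v 0 := by
    intro t ht
    rw [← intervalIntegral.integral_of_le ht.1, hv t (hIccx ht)]; ring
  have hQ : ∀ t ∈ Icc (0:ℝ) x, (∫ s in Ioc (0:ℝ) t, A s) = u t - u 0 := by
    intro t ht
    rw [← intervalIntegral.integral_of_le ht.1, hu t (hIccx ht)]; ring
  -- integrability of the mixed terms
  have i1 : IntegrableOn (fun t => A t * ∫ s in Ioc (0:ℝ) t, B s) (Ioc 0 x) volume := by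
    have : IntegrableOn (fun t => A t * (v t - v 0)) (Ioc 0 x) volume := by
      have := hAx.mul_continuousOn (g := fun t => v t - v 0)
        (by rw [uIcc_of_le hx0]; exact ((hvc.mono hIccx).sub continuousOn_const))
      exact (intervalIntegrable_iff_integrableOn_Ioc_of_le hx0).1 this
    exact this.congr_fun (fun t ht => by beta_reduce; rw [← hP t (Ioc_subset_Icc_self ht)]) measurableSet_Ioc
  have i2 : IntegrableOn (fun t => (∫ s in Ioc (0:ℝ) t, A s) * B t) (Ioc 0 x) volume := by
    have : IntegrableOn (fun t => (u t - u 0) * B t) (Ioc 0 x) volume := by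
      have := hBx.continuousOn_mul (g := fun t => u t - u 0)
        (by rw [uIcc_of_le hx0]; exact ((huc.mono hIccx).sub continuousOn_const))
      exact (intervalIntegrable_iff_integrableOn_Ioc_of_le hx0).1 this
    exact this.congr_fun (fun t ht => by beta_reduce; rw [← hQ t (Ioc_subset_Icc_self ht)]) measurableSet_Ioc
  have iAv : IntegrableOn (fun t => A t * v 0) (Ioc 0 x) volume := iA.mul_const _
  have iuB : IntegrableOn (fun t => u 0 * B t) (Ioc 0 x) volume := iB.const_mul _
  -- rewrite the target integral
  rw [intervalIntegral.integral_of_le hx0]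
  have congr1 : ∫ t in Ioc (0:ℝ) x, (A t * v t + u t * B t)
      = ∫ t in Ioc (0:ℝ) x, ((A t * v 0 + u 0 * B t)
          + (A t * (∫ s in Ioc (0:ℝ) t, B s) + (∫ s in Ioc (0:ℝ) t, A s) * B t)) := by
    refine setIntegral_congr_fun measurableSet_Ioc (fun t ht => ?_)
    rw [hP t (Ioc_subset_Icc_self ht), hQ t (Ioc_subset_Icc_self ht)]; ring
  have eAll : (∫ t in Ioc (0:ℝ) x, (A t * v 0 + u 0 * B t
        + ((A t * ∫ s in Ioc (0:ℝ) t, B s) + (∫ s in Ioc (0:ℝ) t, A s) * B t)))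
      = ((∫ t in Ioc (0:ℝ) x, A t * v 0) + ∫ t in Ioc (0:ℝ) x, u 0 * B t)
        + ((∫ t in Ioc (0:ℝ) x, A t * ∫ s in Ioc (0:ℝ) t, B s)
            + ∫ t in Ioc (0:ℝ) x, (∫ s in Ioc (0:ℝ) t, A s) * B t) :=
    (integral_add (iAv.add iuB) (i1.add i2)).trans
      (by simp only [Pi.add_apply]; rw [integral_add iAv iuB, integral_add i1 i2])
  rw [congr1, eAll, fubini_triangle hx0 iA iB, integral_mul_const, integral_const_mul]
  have hux : ∫ t in Ioc (0:ℝ) x, A t = u x - u 0 := hQ x ⟨hx0, le_rfl⟩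
  have hvx : ∫ t in Ioc (0:ℝ) x, B t = v x - v 0 := hP x ⟨hx0, le_rfl⟩
  rw [hux, hvx]; ring

lemma sq_integral_pos {g : ℝ → ℝ} (hg : ContinuousOn g (Icc 0 π)) {x₀ : ℝ}
    (hx₀ : x₀ ∈ Ioc 0 π) {t₁ : ℝ} (ht₁ : t₁ ∈ Icc 0 x₀) (hne : g t₁ ≠ 0) :
    0 < ∫ t in (0:ℝ)..x₀, (g t)^2 := by
  have hx0 : (0:ℝ) < x₀ := hx₀.1
  have hxπ : x₀ ≤ π := hx₀.2
  have ht₁' : t₁ ∈ Icc (0:ℝ) π := ⟨ht₁.1, ht₁.2.trans hxπ⟩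
  have hcw : ContinuousWithinAt g (Icc 0 π) t₁ := hg.continuousWithinAt ht₁'
  have hpos : 0 < |g t₁| / 2 := by positivity
  obtain ⟨δ, hδ, hδ'⟩ := Metric.continuousWithinAt_iff.mp hcw (|g t₁| / 2) hpos
  set c := max 0 (t₁ - δ/2) with hc
  set d := min x₀ (t₁ + δ/2) with hd
  have hc0 : 0 ≤ c := le_max_left _ _
  have hdx : d ≤ x₀ := min_le_left _ _
  have hcd : c < d := by
    apply max_lt
    · exact lt_min hx0 (by have := ht₁.1; linarith)
    · exact lt_min (lt_of_lt_of_le (by linarith) ht₁.2) (by linarith)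
  have hbound : ∀ t ∈ Icc c d, (g t₁)^2 / 4 ≤ (g t)^2 := by
    intro t ht
    have htmem : t ∈ Icc (0:ℝ) π := ⟨hc0.trans ht.1, ht.2.trans (hdx.trans hxπ)⟩
    have hdist : dist t t₁ < δ := by
      rw [Real.dist_eq, abs_lt]
      constructor
      · have := ht.1; have := le_max_right 0 (t₁ - δ/2); linarith [le_trans (le_max_right 0 (t₁ - δ/2)) ht.1]
      · have := ht.2; have := min_le_right x₀ (t₁ + δ/2); linarith [le_trans ht.2 (min_le_right x₀ (t₁ + δ/2))]
    have := hδ' htmem hdist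
    rw [Real.dist_eq] at this
    have h1 : |g t₁| / 2 ≤ |g t| := by
      have := abs_sub_abs_le_abs_sub (g t₁) (g t)
      rw [abs_sub_comm] at this
      linarith
    calc (g t₁)^2 / 4 = (|g t₁| / 2)^2 := by rw [div_pow, sq_abs]; norm_num
    _ ≤ |g t|^2 := by apply pow_le_pow_left₀ (by positivity) h1
    _ = (g t)^2 := sq_abs _
  -- integrability
  have hgsq : ContinuousOn (fun t => (g t)^2) (Icc 0 π) := hg.pow 2
  have hint : ∀ {p r : ℝ}, 0 ≤ p → p ≤ r → r ≤ π → IntervalIntegrable (fun t => (g t)^2) volume p r := by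
    intro p r hp hpr hrπ
    apply ContinuousOn.intervalIntegrable
    rw [uIcc_of_le hpr]
    exact hgsq.mono (Icc_subset_Icc hp hrπ)
  have hcπ : c ≤ π := (hcd.le.trans hdx).trans hxπ
  have hd0 : 0 ≤ d := hc0.trans hcd.le
  have hdπ : d ≤ π := hdx.trans hxπ
  have h1 := intervalIntegral.integral_add_adjacent_intervals
    (hint hc0 hcd.le hdπ) (hint hd0 hdx hxπ)
  have h2 := intervalIntegral.integral_add_adjacent_intervals
    (hint le_rfl hc0 hcπ) (hint hc0 hcd.le hdπ)
  have hI1 : 0 ≤ ∫ t in (0:ℝ)..c, (g t)^2 :=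
    intervalIntegral.integral_nonneg hc0 (fun u _ => sq_nonneg _)
  have hI3 : 0 ≤ ∫ t in d..x₀, (g t)^2 :=
    intervalIntegral.integral_nonneg hdx (fun u _ => sq_nonneg _)
  have hmid : (d - c) * ((g t₁)^2/4) ≤ ∫ t in c..d, (g t)^2 := by
    have hm := intervalIntegral.integral_mono_on hcd.le
      (intervalIntegrable_const) (hint hc0 hcd.le hdπ) hbound
    rwa [intervalIntegral.integral_const, smul_eq_mul] at hm
  have hKpos : 0 < (d - c) * ((g t₁)^2/4) := by
    apply mul_pos (by linarith)
    have h := abs_pos.mpr hne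
    nlinarith [sq_abs (g t₁)]
  have h3 := intervalIntegral.integral_add_adjacent_intervals
    (hint le_rfl hd0 hdπ) (hint hd0 hdx hxπ)
  linarith [h2, h3]

/-- `y` (with derivative `y'`) is a (Carathéodory) solution of `-y'' + q y = μ y` on `[0, π]`,
written in integral form. -/
def SLSol (q : ℝ → ℝ) (μ : ℝ) (y y' : ℝ → ℝ) : Prop :=
  ContinuousOn y (Icc 0 π) ∧ ContinuousOn y' (Icc 0 π) ∧
  (∀ x ∈ Icc (0:ℝ) π, y x = y 0 + ∫ t in (0:ℝ)..x, y' t) ∧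
  (∀ x ∈ Icc (0:ℝ) π, y' x = y' 0 + ∫ t in (0:ℝ)..x, (q t - μ) * y t)

/-- `y` (with derivative `y'`) solves the inhomogeneous equation `-y'' + q y = g + μ y`
(equivalently `y'' = (q - μ) y - g`) on `[0, π]`, in integral form.  With `g` the original
solution, this is the equation satisfied by the `μ`-derivative of a solution. -/
def SLSolInh (q : ℝ → ℝ) (μ : ℝ) (g y y' : ℝ → ℝ) : Prop :=
  ContinuousOn y (Icc 0 π) ∧ ContinuousOn y' (Icc 0 π) ∧
  (∀ x ∈ Icc (0:ℝ) π, y x = y 0 + ∫ t in (0:ℝ)..x, y' t) ∧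
  (∀ x ∈ Icc (0:ℝ) π, y' x = y' 0 + ∫ t in (0:ℝ)..x, ((q t - μ) * y t - g t))

set_option maxHeartbeats 2000000 in
/-- For a continuously differentiable zero curve `X(μ) ∈ (0, π]` of the solution family `f μ`
normalized at `0`, the derivative satisfies `dX/dμ ≤ 0`, equality being possible only when
`X(μ) = 0`; since `X(μ) > 0`, the inequality is strict: `dX/dμ < 0`. -/
theorem zero_curve_deriv_nonpos_and_strict
    (q : ℝ → ℝ) (hq : IntervalIntegrable q volume 0 π)
    (α : ℝ) (hα : α ∈ Ioc (0:ℝ) π)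
    (f fx fd fxd : ℝ → ℝ → ℝ)
    (hsol : ∀ μ : ℝ, SLSol q μ (f μ) (fx μ))
    (hinit : ∀ μ : ℝ, f μ 0 = sin α ∧ fx μ 0 = -cos α)
    (hfd : ∀ μ : ℝ, ∀ x ∈ Icc (0:ℝ) π, HasDerivAt (fun m => f m x) (fd μ x) μ)
    (hfxd : ∀ μ : ℝ, ∀ x ∈ Icc (0:ℝ) π, HasDerivAt (fun m => fx m x) (fxd μ x) μ)
    (hsold : ∀ μ : ℝ, SLSolInh q μ (f μ) (fd μ) (fxd μ))
    (a b : ℝ) (X X' : ℝ → ℝ)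
    (hX : ∀ μ ∈ Ioo a b, HasDerivAt X (X' μ) μ)
    (hXmem : ∀ μ ∈ Ioo a b, X μ ∈ Ioc (0:ℝ) π)
    (hXzero : ∀ μ ∈ Ioo a b, f μ (X μ) = 0) :
    ∀ μ ∈ Ioo a b, X' μ ≤ 0 ∧ (X' μ = 0 → X μ = 0) ∧ X' μ < 0 := by
  intro μ hμ
  have hππ : (0:ℝ) ≤ π := pi_pos.le
  have hIccU : uIcc (0:ℝ) π = Icc 0 π := uIcc_of_le hππ
  have h0I : (0:ℝ) ∈ Icc (0:ℝ) π := ⟨le_rfl, hππ⟩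
  set x₀ := X μ with hx₀def
  have hx₀ : x₀ ∈ Ioc (0:ℝ) π := hXmem μ hμ
  have hx₀I : x₀ ∈ Icc (0:ℝ) π := ⟨hx₀.1.le, hx₀.2⟩
  have hfz : f μ x₀ = 0 := hXzero μ hμ
  -- unpack solutions
  have hfmc : ∀ m, ContinuousOn (f m) (Icc 0 π) := fun m => (hsol m).1
  have hfxmc : ∀ m, ContinuousOn (fx m) (Icc 0 π) := fun m => (hsol m).2.1
  have hfe : ∀ m, ∀ y ∈ Icc (0:ℝ) π, f m y = f m 0 + ∫ t in (0:ℝ)..y, fx m t :=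
    fun m => (hsol m).2.2.1
  have hfxe : ∀ m, ∀ y ∈ Icc (0:ℝ) π, fx m y = fx m 0 + ∫ t in (0:ℝ)..y, (q t - m) * f m t :=
    fun m => (hsol m).2.2.2
  have hfdc : ContinuousOn (fd μ) (Icc 0 π) := (hsold μ).1
  have hfxdc : ContinuousOn (fxd μ) (Icc 0 π) := (hsold μ).2.1
  have hfde : ∀ y ∈ Icc (0:ℝ) π, fd μ y = fd μ 0 + ∫ t in (0:ℝ)..y, fxd μ t := (hsold μ).2.2.1
  have hfxde : ∀ y ∈ Icc (0:ℝ) π,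
      fxd μ y = fxd μ 0 + ∫ t in (0:ℝ)..y, ((q t - μ) * fd μ t - f μ t) := (hsold μ).2.2.2
  -- integrability helpers
  have hCI : ∀ {g : ℝ → ℝ}, ContinuousOn g (Icc 0 π) → IntervalIntegrable g volume 0 π :=
    fun {g} hg => ContinuousOn.intervalIntegrable (by rw [hIccU]; exact hg)
  have hqm : ∀ (m : ℝ), IntervalIntegrable (fun t => (q t - m) * f m t) volume 0 π := fun m =>
    (hq.sub intervalIntegrable_const).mul_continuousOn (hIccU ▸ hfmc m)
  have hfxint : ∀ m, IntervalIntegrable (fx m) volume 0 π :=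
    fun m => hCI (hfxmc m)
  have hfint : ∀ m, IntervalIntegrable (f m) volume 0 π :=
    fun m => hCI (hfmc m)
  have hfxdint : IntervalIntegrable (fxd μ) volume 0 π :=
    hCI hfxdc
  have hA2int : IntervalIntegrable (fun t => (q t - μ) * fd μ t - f μ t) volume 0 π :=
    ((hq.sub intervalIntegrable_const).mul_continuousOn (hIccU ▸ hfdc)).sub (hfint μ)
  -- zero initial conditions for fd, fxd
  have hfd0 : fd μ 0 = 0 := by
    have h1 := hfd μ 0 h0I
    have h2 : (fun m => f m 0) = fun _ => sin α := funext fun m => (hinit m).1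
    rw [h2] at h1
    exact h1.unique (hasDerivAt_const _ _)
  have hfxd0 : fxd μ 0 = 0 := by
    have h1 := hfxd μ 0 h0I
    have h2 : (fun m => fx m 0) = fun _ => -cos α := funext fun m => (hinit m).2
    rw [h2] at h1
    exact h1.unique (hasDerivAt_const _ _)
  -- Wronskian-type identity: fd x₀ * fx x₀ = ∫₀^{x₀} f²
  have P1 := prodRule hfxdint (hqm μ) hfdc (hfxmc μ) hfde (hfxe μ) x₀ hx₀I
  have P2 := prodRule hA2int (hfxint μ) hfxdc (hfmc μ) hfxde (hfe μ) x₀ hx₀I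
  have hsub01 : uIcc (0:ℝ) x₀ ⊆ uIcc (0:ℝ) π := by
    rw [hIccU, uIcc_of_le hx₀.1.le]; exact Icc_subset_Icc le_rfl hx₀.2
  have i1 : IntervalIntegrable (fun t => fxd μ t * fx μ t + fd μ t * ((q t - μ) * f μ t))
      volume 0 x₀ :=
    ((hCI (hfxdc.mul (hfxmc μ))).mono_set hsub01).add
      (((hqm μ).continuousOn_mul (hIccU ▸ hfdc)).mono_set hsub01)
  have i2 : IntervalIntegrable
      (fun t => ((q t - μ) * fd μ t - f μ t) * f μ t + fxd μ t * fx μ t) volume 0 x₀ :=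
    ((hA2int.mul_continuousOn (hIccU ▸ hfmc μ)).mono_set hsub01).add
      ((hCI (hfxdc.mul (hfxmc μ))).mono_set hsub01)
  have hW2 : fd μ x₀ * fx μ x₀ = ∫ t in (0:ℝ)..x₀, (f μ t)^2 := by
    have hdiff : fd μ x₀ * fx μ x₀ - fxd μ x₀ * f μ x₀
        = ∫ t in (0:ℝ)..x₀, (f μ t)^2 := by
      rw [P1, P2, hfd0, hfxd0, zero_mul, zero_mul, zero_add, zero_add,
        ← intervalIntegral.integral_sub i1 i2]
      exact intervalIntegral.integral_congr (fun t _ => by ring)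
    rw [hfz, mul_zero, sub_zero] at hdiff
    exact hdiff
  -- positivity of the energy integral
  have hE : 0 < ∫ t in (0:ℝ)..x₀, (f μ t)^2 := by
    rcases lt_or_eq_of_le hα.2 with hlt | heq
    · exact sq_integral_pos (hfmc μ) hx₀ ⟨le_rfl, hx₀.1.le⟩
        (by rw [(hinit μ).1]; exact (sin_pos_of_pos_of_lt_pi hα.1 hlt).ne')
    · -- α = π : fx μ 0 = 1, so f μ is positive just to the right of 0
      have hfx0 : fx μ 0 = 1 := by rw [(hinit μ).2, heq, Real.cos_pi]; norm_num
      have hcw : ContinuousWithinAt (fx μ) (Icc 0 π) 0 := (hfxmc μ).continuousWithinAt h0I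
      obtain ⟨δ, hδpos, hδ⟩ := Metric.continuousWithinAt_iff.mp hcw (1/2) (by norm_num)
      set t₁ := min (δ/2) x₀ with ht₁def
      have ht₁pos : 0 < t₁ := lt_min (by positivity) hx₀.1
      have ht₁x₀ : t₁ ≤ x₀ := min_le_right _ _
      have ht₁I : t₁ ∈ Icc (0:ℝ) π := ⟨ht₁pos.le, ht₁x₀.trans hx₀.2⟩
      have hlow : ∀ t ∈ Icc (0:ℝ) t₁, (1:ℝ)/2 ≤ fx μ t := by
        intro t ht
        have htI : t ∈ Icc (0:ℝ) π := ⟨ht.1, (ht.2.trans ht₁x₀).trans hx₀.2⟩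
        have hdist : dist t 0 < δ := by
          rw [Real.dist_eq, sub_zero, abs_of_nonneg ht.1]
          exact lt_of_le_of_lt (ht.2.trans (min_le_left _ _)) (by linarith)
        have := hδ htI hdist
        rw [Real.dist_eq, hfx0] at this
        have := abs_lt.mp this
        linarith [this.1]
      have hft₁ : f μ t₁ ≠ 0 := by
        have hfe1 := hfe μ t₁ ht₁I
        have hmono : ∫ t in (0:ℝ)..t₁, (1:ℝ)/2 ≤ ∫ t in (0:ℝ)..t₁, fx μ t := by
          apply intervalIntegral.integral_mono_on ht₁pos.le intervalIntegrable_const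
          · exact (hfxint μ).mono_set (by
              rw [hIccU, uIcc_of_le ht₁pos.le]; exact Icc_subset_Icc le_rfl ht₁I.2)
          · exact hlow
        rw [intervalIntegral.integral_const, smul_eq_mul] at hmono
        rw [hfe1, (hinit μ).1, heq, Real.sin_pi]
        have : 0 < t₁ * (1/2) := by positivity
        intro hcontra
        rw [zero_add] at hcontra
        rw [hcontra] at hmono
        simp only [sub_zero] at hmono
        linarith
      exact sq_integral_pos (hfmc μ) hx₀ ⟨ht₁pos.le, ht₁x₀⟩ hft₁
  -- abbreviations
  set D0 := fd μ x₀ with hD0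
  set F0 := fx μ x₀ with hF0
  -- the key derivative relation via a little-o estimate
  have hrel : D0 + X' μ * F0 = 0 := by
    have hΨd : HasDerivAt (fun m => f m x₀ + (X m - x₀) * F0) (D0 + X' μ * F0) μ :=
      (hfd μ x₀ hx₀I).add (((hX μ hμ).sub_const x₀).mul_const F0)
    have hΨ0 : HasDerivAt (fun m => f m x₀ + (X m - x₀) * F0) 0 μ := by
      -- Ψ m = ∫_{x₀}^{X m} (F0 - fx m t) dt = o(m - μ)
      have hadj : ∀ (g : ℝ → ℝ), IntervalIntegrable g volume 0 π → ∀ r ∈ Icc (0:ℝ) π,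
          (∫ t in (0:ℝ)..r, g t) - ∫ t in (0:ℝ)..x₀, g t = ∫ t in x₀..r, g t := by
        intro g hg r hr
        have h1 := intervalIntegral.integral_add_adjacent_intervals
          (hg.mono_set (Set.uIcc_subset_uIcc left_mem_uIcc (by rw [hIccU]; exact hx₀I)))
          (hg.mono_set (Set.uIcc_subset_uIcc (by rw [hIccU]; exact hx₀I) (by rw [hIccU]; exact hr)))
        linarith
      rw [hasDerivAt_iff_isLittleO]
      have hΨμ : f μ x₀ + (X μ - x₀) * F0 = 0 := by
        rw [hfz, ← hx₀def, sub_self, zero_mul, add_zero]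
      simp only [smul_zero, sub_zero, hΨμ]
      rw [Asymptotics.isLittleO_iff]
      intro c hc
      obtain ⟨C, hCpos, hCbig⟩ := ((hX μ hμ).isBigO_sub).exists_pos
      have hCb : ∀ᶠ m in 𝓝 μ, |X m - x₀| ≤ C * |m - μ| := by
        have := hCbig.bound
        simpa [Real.norm_eq_abs] using this
      set δ' := c / (2 * C) with hδ'def
      have hδ'pos : 0 < δ' := by positivity
      set B₁ := |F0| + 1 with hB₁def
      have hB₁pos : 0 < B₁ := by positivity
      set B₂ := |μ| + 1 with hB₂def
      -- eventual bounds
      have hev1 : ∀ᶠ m in 𝓝 μ, |f m x₀| ≤ B₁ := by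
        have h2 := Metric.tendsto_nhds.mp ((hfd μ x₀ hx₀I).continuousAt) 1 one_pos
        filter_upwards [h2] with m hm
        rw [Real.dist_eq, hfz, sub_zero] at hm
        have := abs_nonneg F0
        linarith
      have hev2 : ∀ᶠ m in 𝓝 μ, |fx m x₀| ≤ B₁ := by
        have h2 := Metric.tendsto_nhds.mp ((hfxd μ x₀ hx₀I).continuousAt) 1 one_pos
        filter_upwards [h2] with m hm
        rw [Real.dist_eq] at hm
        have := abs_sub_abs_le_abs_sub (fx m x₀) F0
        linarith
      have hev3 : ∀ᶠ m in 𝓝 μ, |m| ≤ B₂ := by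
        filter_upwards [Metric.ball_mem_nhds μ one_pos] with m hm
        rw [Metric.mem_ball, Real.dist_eq] at hm
        have := abs_sub_abs_le_abs_sub m μ
        linarith
      have hev4 : ∀ᶠ m in 𝓝 μ, |fx m x₀ - F0| ≤ δ' := by
        have h2 := Metric.tendsto_nhds.mp ((hfxd μ x₀ hx₀I).continuousAt) δ' hδ'pos
        filter_upwards [h2] with m hm
        rw [Real.dist_eq] at hm
        exact hm.le
      have hev5 : ∀ᶠ m in 𝓝 μ, m ∈ Ioo a b :=
        Filter.eventually_of_mem (isOpen_Ioo.mem_nhds hμ) (fun m hm => hm)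
      -- window choice
      set g0 : ℝ → ℝ := fun s => |q s| + B₂ with hg0def
      have hg0nn : ∀ s, 0 ≤ g0 s := fun s => by rw [hg0def]; positivity
      have hg0int : IntegrableOn g0 (Icc 0 π) volume := by
        have h1 : IntegrableOn q (Ioc 0 π) volume :=
          (intervalIntegrable_iff_integrableOn_Ioc_of_le hππ).1 hq
        have habs : IntegrableOn (fun s => |q s|) (Icc 0 π) volume :=
          ((integrableOn_Icc_iff_integrableOn_Ioc (f := q) (μ := volume)).2 h1).abs
        exact habs.add (integrableOn_const measure_Icc_lt_top.ne)
      have hwin : ∀ ε > 0, ∃ h : ℝ, 0 < h ∧ h ≤ 1 ∧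
          (∫ s in Icc (x₀ - h) (x₀ + h) ∩ Icc 0 π, g0 s) ≤ ε := by
        intro ε hε
        set sn : ℕ → Set ℝ := fun n => Icc (x₀ - 1/(n+1)) (x₀ + 1/(n+1)) ∩ Icc 0 π with hsn
        have hsm : ∀ n, MeasurableSet (sn n) := fun n => measurableSet_Icc.inter measurableSet_Icc
        have hanti : Antitone sn := by
          intro n m hnm
          have hle : (1:ℝ)/(m+1) ≤ 1/(n+1) := by
            apply one_div_le_one_div_of_le (by positivity)
            exact_mod_cast Nat.succ_le_succ hnm
          exact inter_subset_inter_left _ (Icc_subset_Icc (by linarith) (by linarith))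
        have hint0 : ∃ n, IntegrableOn g0 (sn n) volume :=
          ⟨0, hg0int.mono_set inter_subset_right⟩
        have hlim := tendsto_setIntegral_of_antitone hsm hanti hint0
        have hInt : ⋂ n, sn n = {x₀} := by
          apply Set.eq_singleton_iff_unique_mem.mpr
          constructor
          · exact Set.mem_iInter.mpr fun n => ⟨⟨by
              have : (0:ℝ) < 1/(n+1) := by positivity
              linarith, by
              have : (0:ℝ) < 1/(n+1) := by positivity
              linarith⟩, hx₀I⟩
          · intro y hy
            by_contra hne
            have hpos : 0 < |y - x₀| := abs_pos.mpr (sub_ne_zero.mpr hne)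
            obtain ⟨n, hn⟩ := exists_nat_one_div_lt hpos
            have := Set.mem_iInter.mp hy n
            have h1 := this.1.1; have h2 := this.1.2
            have habs : |y - x₀| ≤ 1/(n+1) := abs_le.mpr ⟨by linarith, by linarith⟩
            linarith
        rw [hInt] at hlim
        have hz : (∫ s in ({x₀} : Set ℝ), g0 s) = 0 := by
          have : volume.restrict ({x₀} : Set ℝ) = 0 :=
            Measure.restrict_eq_zero.mpr (measure_singleton x₀)
          rw [this, integral_zero_measure]
        rw [hz] at hlim
        have := hlim.eventually (gt_mem_nhds hε)
        obtain ⟨n, hn⟩ := this.exists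
        refine ⟨1/(n+1), by positivity, by
          rw [div_le_one (by positivity)]
          have : (0:ℝ) ≤ n := Nat.cast_nonneg n
          linarith, hn.le⟩
      obtain ⟨h, hhpos, hh1, hν⟩ := hwin (min (δ'/(4*B₁)) (1/2)) (lt_min (by positivity) (by norm_num))
      set J := Icc (x₀ - h) (x₀ + h) ∩ Icc 0 π with hJdef
      set ν := ∫ s in J, g0 s with hνdef
      have hν1 : ν ≤ δ'/(4*B₁) := hν.trans (min_le_left _ _)
      have hν2 : ν ≤ 1/2 := hν.trans (min_le_right _ _)
      have hνnn : 0 ≤ ν := setIntegral_nonneg (measurableSet_Icc.inter measurableSet_Icc)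
        (fun s _ => hg0nn s)
      have hJIcc : J ⊆ Icc 0 π := inter_subset_right
      have hx₀J : x₀ ∈ J := ⟨⟨by linarith, by linarith⟩, hx₀I⟩
      have hJcompact : IsCompact J := isCompact_Icc.inter_right isClosed_Icc
      have hev6 : ∀ᶠ m in 𝓝 μ, |X m - x₀| ≤ h := by
        have h2 := Metric.tendsto_nhds.mp (hX μ hμ).continuousAt h hhpos
        filter_upwards [h2] with m hm
        rw [Real.dist_eq] at hm
        exact hm.le
      -- the eventual estimate
      rw [Filter.eventually_iff_exists_mem]
      have hbig := hev1.and (hev2.and (hev3.and (hev4.and (hev5.and (hev6.and hCb)))))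
      rw [Filter.eventually_iff_exists_mem] at hbig
      obtain ⟨U, hU, hUprop⟩ := hbig
      refine ⟨U, hU, fun m hmU => ?_⟩
      obtain ⟨hm1, hm2, hm3, hm4, hm5, hm6, hmC⟩ := hUprop m hmU
      have hXmI : X m ∈ Icc (0:ℝ) π := ⟨(hXmem m hm5).1.le, (hXmem m hm5).2⟩
      have habs6 := abs_le.mp hm6
      have hsubJ : uIcc x₀ (X m) ⊆ J := by
        rw [Set.uIcc]
        intro t ht
        have hmin : x₀ - h ≤ x₀ ⊓ X m := le_inf (by linarith) (by linarith [habs6.1])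
        have hmax : x₀ ⊔ X m ≤ x₀ + h := sup_le (by linarith) (by linarith [habs6.2])
        have hmin0 : (0:ℝ) ≤ x₀ ⊓ X m := le_inf hx₀I.1 hXmI.1
        have hmaxπ : x₀ ⊔ X m ≤ π := sup_le hx₀I.2 hXmI.2
        exact ⟨⟨by linarith [ht.1], by linarith [ht.2]⟩,
          ⟨by linarith [ht.1], by linarith [ht.2]⟩⟩
      have hJt : ∀ t ∈ J, t ∈ Icc (0:ℝ) π := fun t ht => hJIcc ht
      have hsubt : ∀ t ∈ J, uIcc x₀ t ⊆ J := by
        intro t htJ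
        rw [Set.uIcc]
        intro s hs
        have h1 := htJ.1.1; have h2 := htJ.1.2
        have hmin : x₀ - h ≤ x₀ ⊓ t := le_inf (by linarith) (by linarith)
        have hmax : x₀ ⊔ t ≤ x₀ + h := sup_le (by linarith) (by linarith)
        have hmin0 : (0:ℝ) ≤ x₀ ⊓ t := le_inf hx₀I.1 (htJ.2).1
        have hmaxπ : x₀ ⊔ t ≤ π := sup_le hx₀I.2 (htJ.2).2
        exact ⟨⟨by linarith [hs.1], by linarith [hs.2]⟩,
          ⟨by linarith [hs.1], by linarith [hs.2]⟩⟩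
      have hsubIcc : ∀ t ∈ J, uIcc x₀ t ⊆ uIcc 0 π := by
        intro t htJ
        exact (hsubt t htJ).trans (by rw [hIccU]; exact hJIcc)
      -- integral splitting identities for this m
      have hfsp : ∀ t ∈ J, f m t - f m x₀ = ∫ s in x₀..t, fx m s := by
        intro t htJ
        have e1 := hfe m t (hJt t htJ)
        have e2 := hfe m x₀ hx₀I
        have e3 := hadj (fx m) (hfxint m) t (hJt t htJ)
        linarith
      have hfxsp : ∀ t ∈ J, fx m t - fx m x₀ = ∫ s in x₀..t, (q s - m) * f m s := by
        intro t htJ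
        have e1 := hfxe m t (hJt t htJ)
        have e2 := hfxe m x₀ hx₀I
        have e3 := hadj (fun s => (q s - m) * f m s) (hqm m) t (hJt t htJ)
        linarith
      -- max of |f m| on the window J
      obtain ⟨t₂, ht₂J, hmax⟩ := hJcompact.exists_isMaxOn ⟨x₀, hx₀J⟩
        (((hfmc m).mono hJIcc).abs)
      set S := |f m t₂| with hSdef
      have hSnn : (0:ℝ) ≤ S := abs_nonneg _
      have hSb : ∀ s ∈ J, |f m s| ≤ S := fun s hs => hmax hs
      -- key integral bound
      have hkey : ∀ t ∈ J, |∫ s in x₀..t, (q s - m) * f m s| ≤ ν * S := by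
        intro t htJ
        have hq1 : IntegrableOn (fun s => ‖(q s - m) * f m s‖) (Set.uIoc x₀ t) volume := by
          have := ((hqm m).mono_set (hsubIcc t htJ))
          exact (intervalIntegrable_iff.mp this).norm
        have hq2 : IntegrableOn (fun s => g0 s * S) J volume := hg0int.mono_set hJIcc |>.mul_const S
        calc |∫ s in x₀..t, (q s - m) * f m s|
            = ‖∫ s in x₀..t, (q s - m) * f m s‖ := (Real.norm_eq_abs _).symm
          _ ≤ ∫ s in Set.uIoc x₀ t, ‖(q s - m) * f m s‖ :=
              intervalIntegral.norm_integral_le_integral_norm_uIoc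
          _ ≤ ∫ s in Set.uIoc x₀ t, g0 s * S := by
              apply setIntegral_mono_on hq1 (hq2.mono_set
                (Set.uIoc_subset_uIcc.trans (hsubt t htJ))) measurableSet_uIoc
              intro s hs
              have hsJ : s ∈ J := (hsubt t htJ) (Set.Ioc_subset_Icc_self hs)
              rw [Real.norm_eq_abs, abs_mul]
              have h1 : |q s - m| ≤ g0 s := by
                have h2 := abs_sub (q s) m
                rw [hg0def]
                simp only []
                linarith
              exact mul_le_mul h1 (hSb s hsJ) (abs_nonneg _) (hg0nn s)
          _ ≤ ∫ s in J, g0 s * S := by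
              apply setIntegral_mono_set hq2
              · exact Filter.Eventually.of_forall (fun s => mul_nonneg (hg0nn s) hSnn)
              · exact HasSubset.Subset.eventuallyLE
                  (Set.uIoc_subset_uIcc.trans (hsubt t htJ))
          _ = ν * S := by rw [hνdef, ← integral_mul_const]
      have hXmJ : X m ∈ J := hsubJ right_mem_uIcc
      -- bound for fx m on the window
      have hfxB : ∀ t ∈ J, |fx m t| ≤ B₁ + ν * S := by
        intro t htJ
        have e1 := hfxsp t htJ
        have e2 := hkey t htJ
        calc |fx m t| = |fx m x₀ + (fx m t - fx m x₀)| := by ring_nf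
          _ ≤ |fx m x₀| + |fx m t - fx m x₀| := abs_add_le _ _
          _ ≤ B₁ + ν * S := add_le_add hm2 (by rw [e1]; exact e2)
      -- the maximum S is bounded
      have hS4 : S ≤ 4 * B₁ := by
        have hsp := hfsp t₂ ht₂J
        have hb : ‖∫ s in x₀..t₂, fx m s‖ ≤ (B₁ + ν * S) * |t₂ - x₀| := by
          apply intervalIntegral.norm_integral_le_of_norm_le_const
          intro s hs
          rw [Real.norm_eq_abs]
          exact hfxB s ((Set.uIoc_subset_uIcc.trans (hsubt t₂ ht₂J)) hs)
        have ht₂h : |t₂ - x₀| ≤ h :=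
          abs_le.mpr ⟨by linarith [ht₂J.1.1], by linarith [ht₂J.1.2]⟩
        rw [Real.norm_eq_abs] at hb
        have hSle : S ≤ B₁ + (B₁ + ν * S) * h := by
          calc S = |f m x₀ + (f m t₂ - f m x₀)| := by rw [hSdef]; ring_nf
            _ ≤ |f m x₀| + |f m t₂ - f m x₀| := abs_add_le _ _
            _ ≤ B₁ + (B₁ + ν * S) * h := by
                refine add_le_add hm1 ?_
                rw [hsp]
                refine hb.trans ?_
                apply mul_le_mul_of_nonneg_left ht₂h
                positivity
        nlinarith [mul_le_mul hh1 hν2 hνnn (by norm_num : (0:ℝ) ≤ 1), hSnn, hhpos.le,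
          mul_nonneg (mul_nonneg hhpos.le hνnn) hSnn]
      -- rewrite Ψ m as a single integral
      have hΨeq : f m x₀ + (X m - x₀) * F0 = ∫ t in x₀..(X m), (F0 - fx m t) := by
        have h1 : f m (X m) - f m x₀ = ∫ t in x₀..(X m), fx m t := hfsp (X m) hXmJ
        have hz := hXzero m hm5
        have h2 : (X m - x₀) * F0 = ∫ t in x₀..(X m), F0 := by
          rw [intervalIntegral.integral_const, smul_eq_mul]
        have h3 : (∫ t in x₀..(X m), F0) - (∫ t in x₀..(X m), fx m t)
            = ∫ t in x₀..(X m), (F0 - fx m t) :=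
          (intervalIntegral.integral_sub intervalIntegrable_const
            ((hfxint m).mono_set (hsubIcc (X m) hXmJ))).symm
        linarith
      -- final bound
      have hbd : ∀ t ∈ Set.uIoc x₀ (X m), ‖F0 - fx m t‖ ≤ δ' + δ' := by
        intro t ht
        have htJ : t ∈ J := (Set.uIoc_subset_uIcc.trans hsubJ) ht
        have e1 := hfxsp t htJ
        have e2 := hkey t htJ
        have e3 : ν * S ≤ δ' := by
          calc ν * S ≤ (δ'/(4*B₁)) * (4*B₁) :=
                mul_le_mul hν1 hS4 hSnn (by positivity)
            _ = δ' := by field_simp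
        rw [Real.norm_eq_abs]
        calc |F0 - fx m t| ≤ |F0 - fx m x₀| + |fx m x₀ - fx m t| := abs_sub_le _ _ _
          _ ≤ δ' + δ' := by
              refine add_le_add (by rw [abs_sub_comm]; exact hm4) ?_
              rw [abs_sub_comm, e1]
              exact e2.trans e3
      have hfinal := intervalIntegral.norm_integral_le_of_norm_le_const hbd
      rw [Real.norm_eq_abs, Real.norm_eq_abs, hΨeq]
      calc |∫ t in x₀..(X m), (F0 - fx m t)| ≤ (δ' + δ') * |X m - x₀| := by
            rw [← Real.norm_eq_abs (∫ t in x₀..(X m), (F0 - fx m t))]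
            exact hfinal
        _ ≤ (δ' + δ') * (C * |m - μ|) :=
            mul_le_mul_of_nonneg_left hmC (by positivity)
        _ = c * |m - μ| := by
            rw [hδ'def]
            field_simp
            ring

    exact hΨd.unique hΨ0
  -- conclusion
  have hF0ne : F0 ≠ 0 := by
    intro h
    rw [h, mul_zero] at hW2
    linarith
  have hXneg : X' μ < 0 := by
    have h1 : X' μ * F0 = -D0 := by linarith
    have h2 : X' μ * F0^2 = -(D0 * F0) := by rw [pow_two, ← mul_assoc, h1]; ring
    rw [hW2] at h2
    nlinarith [sq_nonneg F0, sq_abs F0, pow_pos (abs_pos.mpr hF0ne) 2, sq_abs F0]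
  exact ⟨hXneg.le, fun h => absurd h hXneg.ne, hXneg⟩
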